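/- For every integer n ≥ 1, twice the number of Catalan words of length n avoiding the vincular pattern 32-1 equals 3^{n−1} + 1. -/

import Mathlib

/-- A Catalan word: a word of positive integers starting with 1 in which each
letter exceeds its predecessor by at most 1. -/
def IsCatalanWord {n : ℕ} (w : Fin n → ℕ) : Prop :=
  (∀ i, 1 ≤ w i) ∧ (∀ h : 0 < n, w ⟨0, h⟩ = 1) ∧
  ∀ i : ℕ, ∀ h : i + 1 < n, w ⟨i + 1, h⟩ ≤ w ⟨i, by omega⟩ + 1

/-- `w` contains the vincular pattern 32-1: there are indices `i` and `k` with
`i + 1 < k` and `w i > w (i+1) > w k`. -/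
def Contains32_1 {n : ℕ} (w : Fin n → ℕ) : Prop :=
  ∃ i k : ℕ, ∃ hk : k < n, ∃ hik : i + 1 < k,
    w ⟨i + 1, by omega⟩ < w ⟨i, by omega⟩ ∧ w ⟨k, hk⟩ < w ⟨i + 1, by omega⟩

namespace CatAux
open Finset

/-- The set of Catalan words avoiding 32-1. -/
def CW (n : ℕ) : Set (Fin n → ℕ) := {w | IsCatalanWord w ∧ ¬ Contains32_1 w}

/-- The "floor": max over descent bottoms, at least 1 (when n ≥ 1). -/
def fB {n : ℕ} (w : Fin n → ℕ) : ℕ :=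
  (Finset.range n).sup (fun i =>
    if h : i + 1 < n then
      (if w ⟨i + 1, h⟩ < w ⟨i, by omega⟩ then w ⟨i + 1, h⟩ else 1)
    else 1)

lemma one_le_fB {n : ℕ} (hn : 0 < n) (w : Fin n → ℕ) : 1 ≤ fB w := by
  have h1 : n - 1 ∈ Finset.range n := by simp; omega
  have := Finset.le_sup (f := fun i =>
    if h : i + 1 < n then
      (if w ⟨i + 1, h⟩ < w ⟨i, by omega⟩ then w ⟨i + 1, h⟩ else 1)
    else 1) h1
  rw [dif_neg (show ¬(n - 1 + 1 < n) by omega)] at this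
  exact this

lemma bottom_le_fB {n : ℕ} (w : Fin n → ℕ) (i : ℕ) (h : i + 1 < n)
    (hd : w ⟨i + 1, h⟩ < w ⟨i, by omega⟩) : w ⟨i + 1, h⟩ ≤ fB w := by
  have h1 : i ∈ Finset.range n := by simp; omega
  have := Finset.le_sup (f := fun i =>
    if h : i + 1 < n then
      (if w ⟨i + 1, h⟩ < w ⟨i, by omega⟩ then w ⟨i + 1, h⟩ else 1)
    else 1) h1
  rw [dif_pos h, if_pos hd] at this
  exact this

lemma fB_le {n : ℕ} (w : Fin n → ℕ) (b : ℕ) (hb : 1 ≤ b)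
    (h : ∀ i : ℕ, ∀ h : i + 1 < n, w ⟨i + 1, h⟩ < w ⟨i, by omega⟩ → w ⟨i + 1, h⟩ ≤ b) :
    fB w ≤ b := by
  apply Finset.sup_le
  intro i _
  by_cases h1 : i + 1 < n
  · rw [dif_pos h1]
    by_cases h2 : w ⟨i + 1, h1⟩ < w ⟨i, by omega⟩
    · rw [if_pos h2]; exact h i h1 h2
    · rw [if_neg h2]; exact hb
  · rw [dif_neg h1]; exact hb

lemma snoc_lt {n : ℕ} (v : Fin n → ℕ) (b : ℕ) (i : ℕ) (h : i < n) (h' : i < n + 1) :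
    (Fin.snoc v b : Fin (n + 1) → ℕ) ⟨i, h'⟩ = v ⟨i, h⟩ := by
  have : (⟨i, h'⟩ : Fin (n + 1)) = Fin.castSucc ⟨i, h⟩ := rfl
  rw [this, Fin.snoc_castSucc]

lemma snoc_last {n : ℕ} (v : Fin n → ℕ) (b : ℕ) (h' : n < n + 1) :
    (Fin.snoc v b : Fin (n + 1) → ℕ) ⟨n, h'⟩ = b := by
  have : (⟨n, h'⟩ : Fin (n + 1)) = Fin.last n := rfl
  rw [this, Fin.snoc_last]

/-- initial segment of an avoiding word is avoiding -/
lemma init_mem_CW {n : ℕ} (w : Fin (n + 1) → ℕ) (hw : w ∈ CW (n + 1)) :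
    Fin.init w ∈ CW n := by
  obtain ⟨⟨hpos, hfirst, hstep⟩, havoid⟩ := hw
  refine ⟨⟨fun i => hpos _, fun h => hfirst (by omega), fun i h => hstep i (by omega)⟩, ?_⟩
  intro ⟨i, k, hk, hik, h1, h2⟩
  exact havoid ⟨i, k, by omega, hik, h1, h2⟩

/-- In an avoiding word, the last letter is at least the floor. -/
lemma fB_le_last {n : ℕ} (hn : 0 < n) (w : Fin n → ℕ) (hw : w ∈ CW n) :
    fB w ≤ w ⟨n - 1, by omega⟩ := by
  obtain ⟨⟨hpos, hfirst, hstep⟩, havoid⟩ := hw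
  apply fB_le _ _ (hpos _)
  intro i h hd
  by_cases hi : i + 1 = n - 1
  · have : (⟨i + 1, h⟩ : Fin n) = ⟨n - 1, by omega⟩ := by simp [hi]
    rw [this]
  · by_contra hlt
    push_neg at hlt
    exact havoid ⟨i, n - 1, by omega, by omega, hd, hlt⟩

lemma snoc_mem_CW {n : ℕ} (hn : 0 < n) (v : Fin n → ℕ) (hv : v ∈ CW n) (b : ℕ) :
    Fin.snoc v b ∈ CW (n + 1) ↔ fB v ≤ b ∧ b ≤ v ⟨n - 1, by omega⟩ + 1 := by
  obtain ⟨⟨hpos, hfirst, hstep⟩, havoid⟩ := hv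
  constructor
  · rintro ⟨⟨hpos', hfirst', hstep'⟩, havoid'⟩
    constructor
    · apply fB_le
      · have := hpos' ⟨n, by omega⟩
        rwa [snoc_last] at this
      · intro i h hd
        by_contra hlt
        push_neg at hlt
        refine havoid' ⟨i, n, by omega, by omega, ?_, ?_⟩
        · rwa [snoc_lt _ _ _ h, snoc_lt _ _ _ (by omega)]
        · rw [snoc_lt _ _ _ h, snoc_last]
          exact hlt
    · have := hstep' (n - 1) (by omega)
      have e1 : (⟨n - 1 + 1, by omega⟩ : Fin (n + 1)) = ⟨n, by omega⟩ := by
        simp; omega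
      rw [e1, snoc_last, snoc_lt _ _ _ (by omega)] at this
      exact this
  · rintro ⟨hb1, hb2⟩
    have hb : 1 ≤ b := le_trans (one_le_fB hn v) hb1
    refine ⟨⟨?_, ?_, ?_⟩, ?_⟩
    · intro ⟨i, hi⟩
      by_cases h : i < n
      · rw [snoc_lt _ _ _ h]; exact hpos _
      · have : i = n := by omega
        subst this
        rw [snoc_last]; exact hb
    · intro h
      rw [snoc_lt _ _ _ hn]
      exact hfirst hn
    · intro i h
      by_cases h1 : i + 1 < n
      · rw [snoc_lt _ _ _ h1, snoc_lt _ _ _ (by omega)]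
        exact hstep i h1
      · have : i + 1 = n := by omega
        have e1 : (⟨i + 1, h⟩ : Fin (n + 1)) = ⟨n, by omega⟩ := by simp [this]
        have e2 : i = n - 1 := by omega
        subst e2
        rw [e1, snoc_last, snoc_lt _ _ _ (by omega)]
        exact hb2
    · rintro ⟨i, k, hk, hik, h1, h2⟩
      by_cases hkn : k < n
      · rw [snoc_lt _ _ (i + 1) (by omega), snoc_lt _ _ i (by omega)] at h1
        rw [snoc_lt _ _ k hkn, snoc_lt _ _ (i + 1) (by omega)] at h2
        exact havoid ⟨i, k, hkn, hik, h1, h2⟩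
      · have : k = n := by omega
        subst this
        rw [snoc_lt _ _ _ (by omega), snoc_lt _ _ _ (by omega)] at h1
        rw [snoc_last, snoc_lt _ _ _ (by omega)] at h2
        have : v ⟨i + 1, by omega⟩ ≤ fB v := bottom_le_fB v i (by omega) h1
        omega
lemma fB_snoc {n : ℕ} (hn : 0 < n) (v : Fin n → ℕ) (b : ℕ) (hb1 : fB v ≤ b) (hb : 1 ≤ b) :
    fB (Fin.snoc v b) = if b < v ⟨n - 1, by omega⟩ then b else fB v := by
  have hlast : (Fin.snoc v b : Fin (n + 1) → ℕ) ⟨n, by omega⟩ = b := snoc_last v b _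
  by_cases hc : b < v ⟨n - 1, by omega⟩
  · rw [if_pos hc]
    apply le_antisymm
    · apply fB_le _ _ hb
      intro i h hd
      by_cases h1 : i + 1 < n
      · rw [snoc_lt _ _ (i + 1) h1] at hd ⊢
        rw [snoc_lt _ _ i (by omega)] at hd
        exact le_trans (bottom_le_fB v i h1 hd) hb1
      · have hi : i + 1 = n := by omega
        have e1 : (⟨i + 1, h⟩ : Fin (n + 1)) = ⟨n, by omega⟩ := by simp [hi]
        rw [e1, hlast]
    · have h : n - 1 + 1 < n + 1 := by omega
      have := bottom_le_fB (Fin.snoc v b) (n - 1) h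
      have e1 : (⟨n - 1 + 1, h⟩ : Fin (n + 1)) = ⟨n, by omega⟩ := by simp; omega
      rw [e1, hlast, snoc_lt _ _ (n - 1) (by omega)] at this
      exact this hc
  · rw [if_neg hc]
    apply le_antisymm
    · apply fB_le _ _ (one_le_fB hn v)
      intro i h hd
      by_cases h1 : i + 1 < n
      · rw [snoc_lt _ _ (i + 1) h1] at hd ⊢
        rw [snoc_lt _ _ i (by omega)] at hd
        exact bottom_le_fB v i h1 hd
      · have hi : i = n - 1 := by omega
        subst hi
        have e1 : (⟨n - 1 + 1, h⟩ : Fin (n + 1)) = ⟨n, by omega⟩ := by simp; omega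
        rw [e1, hlast, snoc_lt _ _ (n - 1) (by omega)] at hd
        exact absurd hd hc
    · apply fB_le _ _ (one_le_fB (by omega) (Fin.snoc v b))
      intro i h hd
      have h1 : i + 1 < n + 1 := by omega
      have := bottom_le_fB (Fin.snoc v b) i h1
      rw [snoc_lt _ _ (i + 1) h, snoc_lt _ _ i (by omega)] at this
      exact this hd

lemma CW_bdd {n : ℕ} (w : Fin n → ℕ) (hw : w ∈ CW n) (i : ℕ) (h : i < n) :
    w ⟨i, h⟩ ≤ i + 1 := by
  obtain ⟨⟨hpos, hfirst, hstep⟩, -⟩ := hw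
  induction i with
  | zero => rw [hfirst (by omega)]
  | succ j ih =>
    have := hstep j h
    have := ih (by omega)
    omega

lemma CW_finite (n : ℕ) : (CW n).Finite := by
  apply Set.Finite.subset (Set.Finite.pi (fun _ : Fin n => Set.finite_Iic n))
  intro w hw
  rw [Set.mem_pi]
  intro i _
  have := CW_bdd w hw i.1 i.2
  simp only [Set.mem_Iic]
  have : w i = w ⟨i.1, i.2⟩ := rfl
  omega

/-- The set of avoiding Catalan words, as a Finset. -/
noncomputable def CWF (n : ℕ) : Finset (Fin n → ℕ) := (CW_finite n).toFinset

lemma mem_CWF {n : ℕ} {w : Fin n → ℕ} : w ∈ CWF n ↔ w ∈ CW n :=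
  Set.Finite.mem_toFinset _

/-- The statistic d: last letter minus floor. -/
noncomputable def dd {n : ℕ} (w : Fin n → ℕ) : ℕ :=
  if h : 0 < n then w ⟨n - 1, by omega⟩ - fB w else 0
/-- `Fin.snoc` specialized to non-dependent ℕ-valued functions. -/
def snocF {n : ℕ} (v : Fin n → ℕ) (b : ℕ) : Fin (n + 1) → ℕ := Fin.snoc v b

lemma snoc_injective {n : ℕ} (v : Fin n → ℕ) : Function.Injective (snocF v) := by
  intro b b' h
  simp only [snocF] at h
  have := congrFun h (Fin.last n)
  simpa [Fin.snoc_last] using this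

lemma CWF_succ {n : ℕ} (hn : 0 < n) :
    CWF (n + 1) = (CWF n).biUnion (fun v =>
      (Finset.Icc (fB v) (v ⟨n - 1, by omega⟩ + 1)).image (snocF v)) := by
  ext w
  simp only [Finset.mem_biUnion, Finset.mem_image, Finset.mem_Icc, mem_CWF]
  constructor
  · intro hw
    have hinit := init_mem_CW w hw
    refine ⟨Fin.init w, hinit, w (Fin.last n), ?_, Fin.snoc_init_self w⟩
    have hmem : Fin.snoc (Fin.init w) (w (Fin.last n)) ∈ CW (n + 1) := by
      rw [Fin.snoc_init_self]; exact hw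
    exact (snoc_mem_CW hn _ hinit _).mp hmem
  · rintro ⟨v, hv, b, hb, rfl⟩
    exact (snoc_mem_CW hn v hv b).mpr hb

lemma CWF_disj {n : ℕ} (hn : 0 < n) : (↑(CWF n) : Set (Fin n → ℕ)).PairwiseDisjoint (fun v =>
    (Finset.Icc (fB v) (v ⟨n - 1, by omega⟩ + 1)).image (snocF v)) := by
  intro v hv v' hv' hne
  rw [Function.onFun, Finset.disjoint_left]
  rintro w hw hw'
  simp only [Finset.mem_image] at hw hw'
  obtain ⟨b, -, rfl⟩ := hw
  obtain ⟨b', -, he⟩ := hw'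
  apply hne
  have h1 : v' = Fin.init (snocF v' b') := by
    simp only [snocF, Fin.init_snoc]
  rw [h1, he]
  simp only [snocF, Fin.init_snoc]

lemma sum_aux (m a : ℕ) (h : m ≤ a) :
    ∑ b ∈ Finset.Icc m (a + 1), (b - (if b < a then b else m)) = 2 * (a - m) + 1 := by
  rw [← Finset.sum_subset (Finset.Icc_subset_Icc_left h : Finset.Icc a (a + 1) ⊆ Finset.Icc m (a + 1))]
  · rw [Finset.sum_Icc_succ_top (by omega : a ≤ a + 1), Finset.Icc_self, Finset.sum_singleton]
    rw [if_neg (by omega), if_neg (by omega)]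
    omega
  · intro x hx hx'
    simp only [Finset.mem_Icc] at hx hx'
    rw [if_pos (by omega)]
    omega

lemma card_succ {n : ℕ} (hn : 0 < n) :
    (CWF (n + 1)).card = ∑ v ∈ CWF n, (dd v + 2) := by
  rw [CWF_succ hn, Finset.card_biUnion (fun v hv v' hv' hne => CWF_disj hn (by simpa using hv) (by simpa using hv') hne)]
  refine Finset.sum_congr rfl (fun v hv => ?_)
  rw [Finset.card_image_of_injective _ (snoc_injective v), Nat.card_Icc]
  have ha := fB_le_last hn v (mem_CWF.mp hv)
  simp only [dd, dif_pos hn]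
  omega

lemma sum_dd_succ {n : ℕ} (hn : 0 < n) :
    ∑ w ∈ CWF (n + 1), dd w = ∑ v ∈ CWF n, (2 * dd v + 1) := by
  rw [CWF_succ hn, Finset.sum_biUnion (CWF_disj hn)]
  refine Finset.sum_congr rfl (fun v hv => ?_)
  rw [Finset.sum_image (fun b _ b' _ h => snoc_injective v h)]
  have ha := fB_le_last hn v (mem_CWF.mp hv)
  have key : ∀ b ∈ Finset.Icc (fB v) (v ⟨n - 1, by omega⟩ + 1),
      dd (snocF v b) = b - (if b < v ⟨n - 1, by omega⟩ then b else fB v) := by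
    intro b hb
    simp only [Finset.mem_Icc] at hb
    have hb1 : 1 ≤ b := le_trans (one_le_fB hn v) hb.1
    have e0 : dd (snocF v b) = (Fin.snoc v b : Fin (n + 1) → ℕ) ⟨n, by omega⟩ - fB (Fin.snoc v b) := by
      simp only [dd, dif_pos (by omega : 0 < n + 1), snocF]
      rfl
    rw [e0, snoc_last, fB_snoc hn v b hb.1 hb1]
  rw [Finset.sum_congr rfl key, sum_aux _ _ ha]
  simp only [dd, dif_pos hn]

lemma CWF_one : CWF 1 = {fun _ => 1} := by
  ext w
  simp only [mem_CWF, Finset.mem_singleton]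
  constructor
  · rintro ⟨⟨hpos, hfirst, hstep⟩, -⟩
    funext i
    have : i = ⟨0, by omega⟩ := Subsingleton.elim _ _
    rw [this, hfirst]
  · rintro rfl
    refine ⟨⟨fun i => le_refl 1, fun h => rfl, fun i h => by omega⟩, ?_⟩
    rintro ⟨i, k, hk, hik, -⟩
    omega

lemma dd_one : dd (fun _ => 1 : Fin 1 → ℕ) = 0 := by
  have hfb : fB (fun _ => 1 : Fin 1 → ℕ) = 1 := by
    apply le_antisymm
    · exact fB_le _ _ le_rfl (fun i h => by omega)
    · exact one_le_fB one_pos _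
  simp only [dd, dif_pos one_pos, hfb]

lemma main_count (n : ℕ) (hn : 1 ≤ n) :
    2 * (CWF n).card = 3 ^ (n - 1) + 1 ∧ 2 * ∑ w ∈ CWF n, dd w = 3 ^ (n - 1) - 1 := by
  induction n, hn using Nat.le_induction with
  | base =>
    rw [CWF_one]
    rw [Finset.card_singleton, Finset.sum_singleton, dd_one]
    norm_num
  | succ n hn ih =>
    obtain ⟨h1, h2⟩ := ih
    have e1 := card_succ (by omega : 0 < n)
    have e2 := sum_dd_succ (by omega : 0 < n)
    rw [Finset.sum_add_distrib, Finset.sum_const, smul_eq_mul] at e1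
    rw [Finset.sum_add_distrib, Finset.sum_const, smul_eq_mul, ← Finset.mul_sum] at e2
    have hp : 1 ≤ 3 ^ (n - 1) := Nat.one_le_pow _ _ (by norm_num)
    have hp2 : 3 ^ (n + 1 - 1) = 3 * 3 ^ (n - 1) := by
      rw [show n + 1 - 1 = (n - 1) + 1 by omega, pow_succ]
      ring
    omega

end CatAux

theorem catalan_avoid_32_1 (n : ℕ) (hn : 1 ≤ n) :
    2 * Set.ncard {w : Fin n → ℕ | IsCatalanWord w ∧ ¬ Contains32_1 w} =
      3 ^ (n - 1) + 1 := by
  have h := (CatAux.main_count n hn).1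
  have e : Set.ncard {w : Fin n → ℕ | IsCatalanWord w ∧ ¬ Contains32_1 w} = (CatAux.CWF n).card :=
    Set.ncard_eq_toFinset_card _ (CatAux.CW_finite n)
  rw [e, h]
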